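/- Let R be a finite proper nearfield with |R| = q and k ≥ 1. Set n = (q^k − 1)/(q − 1). Then there exist vectors v_1,…,v_k ∈ R^n with gen(v_1,…,v_k) = R^n. Consequently mdim(k,R), the maximum dimension of a near-vector space R^m generable by k vectors, equals (q^k − 1)/(q − 1). -/
import Mathlib


open scoped BigOperators

/-- A (left) nearfield: a zero-symmetric (left) nearring whose nonzero
elements form a multiplicative group. The additive group is abelian. -/
class Nearfield (R : Type*) extends AddCommGroup R, One R, Mul R, Inv R where
  protected mul_assoc : ∀ a b c : R, a * b * c = a * (b * c)
  protected left_distrib : ∀ a b c : R, a * (b + c) = a * b + a * c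
  protected zero_mul : ∀ a : R, (0 : R) * a = 0
  protected mul_zero : ∀ a : R, a * (0 : R) = 0
  protected one_mul : ∀ a : R, (1 : R) * a = a
  protected mul_one : ∀ a : R, a * (1 : R) = a
  protected one_ne_zero : (1 : R) ≠ 0
  protected mul_inv_cancel : ∀ a : R, a ≠ 0 → a * a⁻¹ = 1
  protected inv_mul_cancel : ∀ a : R, a ≠ 0 → a⁻¹ * a = 1

namespace Nearfield

/-- A nearfield is proper if it is not a skewfield (right distributivity fails). -/
def IsProper (R : Type*) [Nearfield R] : Prop :=
  ∃ a b c : R, (a + b) * c ≠ a * c + b * c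

variable {R : Type*} [Nearfield R]

/-- Right scalar multiplication on `R^n`, applied coordinatewise. -/
def vsmul {n : ℕ} (v : Fin n → R) (r : R) : Fin n → R := fun i => v i * r

/-- An `R`-subgroup of `R^n`: an additive subgroup closed under right scalar
multiplication. -/
def IsRSubgroup {n : ℕ} (H : Set (Fin n → R)) : Prop :=
  (0 : Fin n → R) ∈ H ∧ (∀ x ∈ H, ∀ y ∈ H, x + y ∈ H) ∧
    (∀ x ∈ H, -x ∈ H) ∧ (∀ x ∈ H, ∀ r : R, vsmul x r ∈ H)

/-- `gen S` is the smallest `R`-subgroup containing `S`. -/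
def gen {n : ℕ} (S : Set (Fin n → R)) : Set (Fin n → R) :=
  ⋂₀ {H : Set (Fin n → R) | IsRSubgroup H ∧ S ⊆ H}

/-- The support of a vector. -/
def supp {n : ℕ} (u : Fin n → R) : Set (Fin n) := {i | u i ≠ 0}

/-- `dirSum u = { Σ_i u_i r_i : r_i ∈ R }`. -/
def dirSum {n ℓ : ℕ} (u : Fin ℓ → Fin n → R) : Set (Fin n → R) :=
  {v | ∃ r : Fin ℓ → R, v = ∑ i, vsmul (u i) (r i)}

/-- The "scalar product" `⟨x,y⟩ = Σ_i x_i·y_i`. -/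
def dot {n : ℕ} (x y : Fin n → R) : R := ∑ i, x i * y i

/-- The weight of a vector: the number of its nonzero coordinates. -/
noncomputable def weight {n : ℕ} (u : Fin n → R) : ℕ := (supp u).ncard

/-- A vector is simple if it has weight one or two. -/
def IsSimple {n : ℕ} (u : Fin n → R) : Prop := weight u = 1 ∨ weight u = 2

/-- The orthogonal set `D^⊥`. -/
def perp {n : ℕ} (D : Set (Fin n → R)) : Set (Fin n → R) :=
  {x | ∀ e ∈ D, dot e x = 0}

/-- `c(k,R)`: nonzero vectors of `R^k` whose first nonzero coordinate is `1`. -/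
def cSet (R : Type*) [Nearfield R] (k : ℕ) : Set (Fin k → R) :=
  {u | ∃ i : Fin k, u i = 1 ∧ ∀ j : Fin k, j < i → u j = 0}

/-- The seed number of `T`: the least size of a set generating `T`. -/
noncomputable def seed {n : ℕ} (T : Set (Fin n → R)) : ℕ :=
  sInf {k | ∃ S : Finset (Fin n → R), S.card = k ∧ gen (↑S : Set (Fin n → R)) = T}

/-- Iterated linear-combination closures. -/
def LC {n : ℕ} (S : Set (Fin n → R)) : ℕ → Set (Fin n → R)
  | 0 => S
  | m + 1 => {v | ∃ (ℓ : ℕ) (w : Fin ℓ → Fin n → R) (lam : Fin ℓ → R),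
      (∀ i, w i ∈ LC S m) ∧ v = ∑ i, vsmul (w i) (lam i)}

end Nearfield

/-- Stirling numbers of the second kind. -/
def stirling2 : ℕ → ℕ → ℕ
  | 0, 0 => 1
  | 0, _ + 1 => 0
  | _ + 1, 0 => 0
  | n + 1, k + 1 => (k + 1) * stirling2 n (k + 1) + stirling2 n k

open Nearfield

section Aux

open Nearfield Set

variable {R : Type*} [Nearfield R]

lemma nf_assoc (a b c : R) : a * b * c = a * (b * c) := Nearfield.mul_assoc a b c

lemma nf_ld (a b c : R) : a * (b + c) = a * b + a * c := Nearfield.left_distrib a b c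

lemma nf_zero_mul (a : R) : (0 : R) * a = 0 := Nearfield.zero_mul a

lemma nf_mul_zero (a : R) : a * (0 : R) = 0 := Nearfield.mul_zero a

lemma nf_one_mul (a : R) : (1 : R) * a = a := Nearfield.one_mul a

lemma nf_mul_one (a : R) : a * (1 : R) = a := Nearfield.mul_one a

lemma nf_one_ne_zero : (1 : R) ≠ 0 := Nearfield.one_ne_zero

lemma nf_mul_neg (a b : R) : a * (-b) = -(a * b) := by
  have h : a * b + a * (-b) = 0 := by
    rw [← nf_ld, add_neg_cancel, nf_mul_zero]
  exact eq_neg_of_add_eq_zero_right h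

lemma nf_inv_mul_cancel_left {a : R} (ha : a ≠ 0) (b : R) : a⁻¹ * (a * b) = b := by
  rw [← nf_assoc, Nearfield.inv_mul_cancel a ha, nf_one_mul]

lemma nf_mul_inv_cancel_left {a : R} (ha : a ≠ 0) (b : R) : a * (a⁻¹ * b) = b := by
  rw [← nf_assoc, Nearfield.mul_inv_cancel a ha, nf_one_mul]

lemma nf_mul_left_cancel {a b c : R} (ha : a ≠ 0) (h : a * b = a * c) : b = c := by
  have := congrArg (fun z => a⁻¹ * z) h
  simpa [nf_inv_mul_cancel_left ha] using this

lemma nf_mul_ne_zero {a b : R} (ha : a ≠ 0) (hb : b ≠ 0) : a * b ≠ 0 := by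
  intro h
  exact hb (nf_mul_left_cancel ha (h.trans (nf_mul_zero a).symm))

lemma nf_inv_ne_zero {a : R} (ha : a ≠ 0) : a⁻¹ ≠ 0 := by
  intro h
  exact nf_one_ne_zero (R := R)
    (by rw [← Nearfield.mul_inv_cancel a ha, h, nf_mul_zero])

@[simp] lemma vsmul_apply {n : ℕ} (x : Fin n → R) (r : R) (i : Fin n) :
    vsmul x r i = x i * r := rfl

lemma rsub_sub_mem {n : ℕ} {H : Set (Fin n → R)} (hH : IsRSubgroup H)
    {x y : Fin n → R} (hx : x ∈ H) (hy : y ∈ H) : x - y ∈ H := by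
  rw [sub_eq_add_neg]
  exact hH.2.1 x hx (-y) (hH.2.2.1 y hy)

lemma subset_gen {n : ℕ} (S : Set (Fin n → R)) : S ⊆ gen S := by
  intro x hx
  rw [gen, Set.mem_sInter]
  exact fun t ht => ht.2 hx

lemma gen_min {n : ℕ} {S H : Set (Fin n → R)} (hH : IsRSubgroup H) (hS : S ⊆ H) :
    gen S ⊆ H := fun x hx => (Set.mem_sInter.1 hx) H ⟨hH, hS⟩

lemma isRSubgroup_gen {n : ℕ} (S : Set (Fin n → R)) : IsRSubgroup (gen S) := by
  refine ⟨?_, ?_, ?_, ?_⟩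
  · exact Set.mem_sInter.2 fun t ht => ht.1.1
  · intro x hx y hy
    exact Set.mem_sInter.2 fun t ht =>
      ht.1.2.1 x (Set.mem_sInter.1 hx t ht) y (Set.mem_sInter.1 hy t ht)
  · intro x hx
    exact Set.mem_sInter.2 fun t ht => ht.1.2.2.1 x (Set.mem_sInter.1 hx t ht)
  · intro x hx r
    exact Set.mem_sInter.2 fun t ht => ht.1.2.2.2 x (Set.mem_sInter.1 hx t ht) r

lemma exists_first {k : ℕ} {w : Fin k → R} (hw : w ≠ 0) :
    ∃ i, w i ≠ 0 ∧ ∀ j, j < i → w j = 0 := by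
  classical
  have hne : ∃ i, w i ≠ 0 := by
    by_contra h
    push_neg at h
    exact hw (funext fun i => h i)
  obtain ⟨i, hi⟩ := hne
  obtain ⟨i0, hi0mem, hmin⟩ :=
    Finset.exists_min_image (Finset.univ.filter fun i => w i ≠ 0) id ⟨i, by simp [hi]⟩
  refine ⟨i0, by simpa using hi0mem, fun j hj => ?_⟩
  by_contra hne0
  exact absurd (hmin j (by simp [hne0])) (by simpa using hj)

end Aux
section Class2

open Nearfield Set

variable {R : Type*} [Nearfield R]

/-- Classification of `R`-subgroups of `R^2`. -/
lemma classify2 {H : Set (Fin 2 → R)} (hH : IsRSubgroup H) :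
    H = Set.univ ∨ (∀ x ∈ H, x 0 = 0) ∨ ∃ a : R, ∀ x ∈ H, x 1 = a * x 0 := by
  by_cases h0 : ∃ x ∈ H, x 0 ≠ 0
  · obtain ⟨x, hxH, hx0⟩ := h0
    by_cases h1 : ∀ z ∈ H, z 0 = 0 → z 1 = 0
    · -- H is the graph of left multiplication by a
      refine Or.inr (Or.inr ⟨x 1 * (x 0)⁻¹, fun y hy => ?_⟩)
      have hzH : y - vsmul x ((x 0)⁻¹ * y 0) ∈ H :=
        rsub_sub_mem hH hy (hH.2.2.2 x hxH _)
      have e0 : (y - vsmul x ((x 0)⁻¹ * y 0)) 0 = 0 := by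
        simp [nf_mul_inv_cancel_left hx0]
      have e1 := h1 _ hzH e0
      have : y 1 = x 1 * ((x 0)⁻¹ * y 0) := by
        have := sub_eq_zero.1 (by simpa using e1)
        simpa using this
      rw [this, ← nf_assoc]
    · -- H contains a "vertical" vector, hence is everything
      left
      push_neg at h1
      obtain ⟨z, hzH, hz0, hz1⟩ := h1
      apply Set.eq_univ_of_forall
      intro w
      have huH : vsmul z ((z 1)⁻¹ * (w 1 - x 1 * ((x 0)⁻¹ * w 0))) ∈ H :=
        hH.2.2.2 z hzH _
      have hmem : vsmul x ((x 0)⁻¹ * w 0) +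
          vsmul z ((z 1)⁻¹ * (w 1 - x 1 * ((x 0)⁻¹ * w 0))) ∈ H :=
        hH.2.1 _ (hH.2.2.2 x hxH _) _ huH
      have heq : vsmul x ((x 0)⁻¹ * w 0) +
          vsmul z ((z 1)⁻¹ * (w 1 - x 1 * ((x 0)⁻¹ * w 0))) = w := by
        funext i
        fin_cases i
        · simp [hz0, nf_zero_mul, nf_mul_inv_cancel_left hx0]
        · simp [nf_mul_inv_cancel_left hz1]
      rwa [heq] at hmem
  · push_neg at h0
    exact Or.inr (Or.inl h0)

lemma B2 {H : Set (Fin 2 → R)} (hH : IsRSubgroup H)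
    (hp : ∀ i j : Fin 2, i ≠ j → ∀ a b : R, ∃ x ∈ H, x i = a ∧ x j = b) :
    H = Set.univ := by
  rcases classify2 hH with h | h | ⟨a, h⟩
  · exact h
  · obtain ⟨x, hx, h1, -⟩ := hp 0 1 (by decide) 1 0
    exact absurd (h1 ▸ h x hx) nf_one_ne_zero
  · obtain ⟨x, hx, h0, h1⟩ := hp 0 1 (by decide) 1 (a + 1)
    have hx1 := h x hx
    rw [h0, h1, nf_mul_one] at hx1
    exact absurd (add_eq_left.1 hx1) nf_one_ne_zero

end Class2
section B3

open Nearfield Set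

variable {R : Type*} [Nearfield R]

lemma B3 (hR : IsProper R) {H : Set (Fin 3 → R)} (hH : IsRSubgroup H)
    (hp : ∀ i j : Fin 3, i ≠ j → ∀ a b : R, ∃ x ∈ H, x i = a ∧ x j = b) :
    H = Set.univ := by
  obtain ⟨p, q, r, hpqr⟩ := hR
  -- the subgroup of pairs extendable by 0 in the last coordinate
  set K : Set (Fin 2 → R) :=
    {y | ∃ x ∈ H, x 0 = y 0 ∧ x 1 = y 1 ∧ x 2 = 0} with hKdef
  have hKsub : IsRSubgroup K := by
    refine ⟨⟨0, hH.1, by simp⟩, ?_, ?_, ?_⟩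
    · rintro y ⟨x, hx, e0, e1, e2⟩ y' ⟨x', hx', e0', e1', e2'⟩
      exact ⟨x + x', hH.2.1 x hx x' hx', by simp [e0, e0'], by simp [e1, e1'],
        by simp [e2, e2']⟩
    · rintro y ⟨x, hx, e0, e1, e2⟩
      exact ⟨-x, hH.2.2.1 x hx, by simp [e0], by simp [e1], by simp [e2]⟩
    · rintro y ⟨x, hx, e0, e1, e2⟩ r'
      exact ⟨vsmul x r', hH.2.2.2 x hx r', by simp [e0], by simp [e1],
        by simp [e2, nf_zero_mul]⟩
  -- "engine" elements: vectors of H with last coordinate 0 and a prescribed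
  -- nonzero coordinate, obtained from the failure of right distributivity
  have engine : ∀ i : Fin 3, i ≠ 2 → ∃ z ∈ H, z i ≠ 0 ∧ z 2 = 0 := by
    intro i hi
    obtain ⟨x, hxH, hx1, hx2⟩ := hp i 2 hi p 0
    obtain ⟨y, hyH, hy1, hy2⟩ := hp i 2 hi q 0
    refine ⟨vsmul (x + y) r - vsmul x r - vsmul y r,
      rsub_sub_mem hH (rsub_sub_mem hH (hH.2.2.2 _ (hH.2.1 x hxH y hyH) r)
        (hH.2.2.2 x hxH r)) (hH.2.2.2 y hyH r), ?_, ?_⟩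
    · have : (vsmul (x + y) r - vsmul x r - vsmul y r) i
          = (p + q) * r - (p * r + q * r) := by
        simp [hx1, hy1, sub_sub]
      rw [this, sub_ne_zero]
      exact hpqr
    · simp [hx2, hy2, nf_zero_mul]
  rcases classify2 hKsub with hKu | hK0 | ⟨a, hKa⟩
  · -- K = univ : conclude directly
    have hst : ∀ s t : R, ∃ x ∈ H, x 0 = s ∧ x 1 = t ∧ x 2 = 0 := by
      intro s t
      have hmem : (![s, t] : Fin 2 → R) ∈ K := by rw [hKu]; trivial
      obtain ⟨x, hx, e0, e1, e2⟩ := hmem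
      exact ⟨x, hx, by simpa using e0, by simpa using e1, e2⟩
    obtain ⟨x₁, hx₁, hx₁2, -⟩ := hp 2 0 (by decide) 1 0
    obtain ⟨u, huH, hu0, hu1, hu2⟩ := hst (x₁ 0) (x₁ 1)
    have hdH : x₁ - u ∈ H := rsub_sub_mem hH hx₁ huH
    have hd0 : (x₁ - u) 0 = 0 := by simp [hu0]
    have hd1 : (x₁ - u) 1 = 0 := by simp [hu1]
    have hd2 : (x₁ - u) 2 = 1 := by simp [hu2, hx₁2]
    apply Set.eq_univ_of_forall
    intro w
    obtain ⟨u', hu'H, e0, e1, e2⟩ := hst (w 0) (w 1)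
    have hmem : u' + vsmul (x₁ - u) (w 2) ∈ H :=
      hH.2.1 _ hu'H _ (hH.2.2.2 _ hdH _)
    have heq : u' + vsmul (x₁ - u) (w 2) = w := by
      funext i
      fin_cases i
      · simpa [e0, hd0] using nf_zero_mul (w 2)
      · simpa [e1, hd1] using nf_zero_mul (w 2)
      · simp [e2, hd2, nf_one_mul]
    rwa [heq] at hmem
  · -- first projection of K vanishes : impossible
    obtain ⟨z, hzH, hz0, hz2⟩ := engine 0 (by decide)
    exact absurd (hK0 ![z 0, z 1] ⟨z, hzH, by simp, by simp, hz2⟩)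
      (by simpa using hz0)
  · -- K is the graph of left multiplication by a : contradiction with properness
    have hmemK : ∀ x ∈ H, x 2 = 0 → x 1 = a * x 0 := by
      intro x hx h2
      simpa using hKa ![x 0, x 1] ⟨x, hx, by simp, by simp, h2⟩
    obtain ⟨z, hzH, hz1, hz2⟩ := engine 1 (by decide)
    have ha : a ≠ 0 := by
      intro h
      exact hz1 (by rw [hmemK z hzH hz2, h, nf_zero_mul])
    have P : ∀ s : R, ∃ x ∈ H, x 0 = s ∧ x 1 = a * s ∧ x 2 = 0 := by
      intro s
      obtain ⟨x, hx, e0, e2⟩ := hp 0 2 (by decide) s 0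
      exact ⟨x, hx, e0, by rw [← e0]; exact hmemK x hx e2, e2⟩
    obtain ⟨x, hxH, hxe0, hxe1⟩ := hp 0 1 (by decide) 1 0
    have htne : x 2 ≠ 0 := by
      intro h
      have := hmemK x hxH h
      rw [hxe0, hxe1, nf_mul_one] at this
      exact ha this.symm
    obtain ⟨p₁, hp₁H, hp₁0, hp₁1, hp₁2⟩ := P 1
    have hx''H : x - p₁ ∈ H := rsub_sub_mem hH hxH hp₁H
    have hx''0 : (x - p₁) 0 = 0 := by simp [hxe0, hp₁0]
    have hx''1 : (x - p₁) 1 = -a := by simp [hxe1, hp₁1, nf_mul_one]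
    have hx''2 : (x - p₁) 2 = x 2 := by simp [hp₁2]
    have Q : ∀ s c : R, ∃ F ∈ H,
        F 0 = s ∧ F 1 = a * s + (-a) * ((x 2)⁻¹ * c) ∧ F 2 = c := by
      intro s c
      obtain ⟨pe, hpeH, e0, e1, e2⟩ := P s
      refine ⟨pe + vsmul (x - p₁) ((x 2)⁻¹ * c),
        hH.2.1 _ hpeH _ (hH.2.2.2 _ hx''H _), ?_, ?_, ?_⟩
      · simp [e0, hx''0, nf_zero_mul]
      · simp [e1, hx''1]
      · simp [e2, hx''2, nf_mul_inv_cancel_left htne]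
    have I : ∀ s c l : R, (a * s + (-a) * ((x 2)⁻¹ * c)) * l
        = a * (s * l) + (-a) * ((x 2)⁻¹ * (c * l)) := by
      intro s c l
      obtain ⟨F, hF, f0, f1, f2⟩ := Q s c
      obtain ⟨F', hF', f0', f1', f2'⟩ := Q (s * l) (c * l)
      have hD : vsmul F l - F' ∈ H := rsub_sub_mem hH (hH.2.2.2 _ hF _) hF'
      have hD0 : (vsmul F l - F') 0 = 0 := by simp [f0, f0']
      have hD2 : (vsmul F l - F') 2 = 0 := by simp [f2, f2']
      have hD1 := hmemK _ hD hD2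
      rw [hD0, nf_mul_zero] at hD1
      have h1 : F 1 * l = F' 1 := by
        have := sub_eq_zero.1 (by simpa using hD1)
        simpa using this
      rw [f1, f1'] at h1
      exact h1
    have key : ∀ u v l : R, (u + v) * l = u * l + v * l := by
      intro u v l
      have hna : (-a : R) ≠ 0 := neg_ne_zero.2 ha
      have hWne : (-a) * (x 2)⁻¹ ≠ 0 := nf_mul_ne_zero hna (nf_inv_ne_zero htne)
      have hu : a * (a⁻¹ * u) = u := nf_mul_inv_cancel_left ha u
      have hv : (-a) * ((x 2)⁻¹ * (((-a) * (x 2)⁻¹)⁻¹ * v)) = v := by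
        rw [← nf_assoc]
        exact nf_mul_inv_cancel_left hWne v
      have h := I (a⁻¹ * u) (((-a) * (x 2)⁻¹)⁻¹ * v) l
      rw [hu, hv] at h
      rw [h]
      congr 1
      · rw [← nf_assoc a (a⁻¹ * u) l, hu]
      · rw [← nf_assoc ((x 2)⁻¹) (((-a) * (x 2)⁻¹)⁻¹ * v) l,
          ← nf_assoc (-a) ((x 2)⁻¹ * (((-a) * (x 2)⁻¹)⁻¹ * v)) l, hv]
    exact absurd (key p q r) hpqr

end B3
section Bgen

open Nearfield Set

variable {R : Type*} [Nearfield R]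

lemma Bgen (hR : IsProper R) : ∀ n : ℕ, 2 ≤ n → ∀ H : Set (Fin n → R),
    IsRSubgroup H →
    (∀ i j : Fin n, i ≠ j → ∀ a b : R, ∃ x ∈ H, x i = a ∧ x j = b) →
    H = Set.univ := by
  intro n
  induction n using Nat.strong_induction_on with
  | _ n IH =>
    intro hn H hH hp
    obtain rfl | rfl | hge : n = 2 ∨ n = 3 ∨ 4 ≤ n := by omega
    · exact B2 hH hp
    · exact B3 hR hH hp
    · obtain ⟨m, rfl⟩ : ∃ m, n = m + 4 := ⟨n - 4, by omega⟩
      have hlast : ∀ i : Fin (m + 3), (Fin.castSucc i : Fin (m + 4)) ≠ Fin.last (m + 3) :=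
        fun i => Fin.ne_of_lt (Fin.castSucc_lt_last i)
      -- projections to triples containing the last coordinate are full
      have H3univ : ∀ i j : Fin (m + 4), i ≠ j → i ≠ Fin.last (m + 3) →
          j ≠ Fin.last (m + 3) → ∀ a b : R,
          ∃ x ∈ H, x i = a ∧ x j = b ∧ x (Fin.last (m + 3)) = 0 := by
        intro i j hij hi hj a b
        set H3 : Set (Fin 3 → R) :=
          {z | ∃ x ∈ H, z 0 = x i ∧ z 1 = x j ∧ z 2 = x (Fin.last (m + 3))} with hH3
        have hsub : IsRSubgroup H3 := by
          refine ⟨⟨0, hH.1, by simp⟩, ?_, ?_, ?_⟩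
          · rintro z ⟨x, hx, e0, e1, e2⟩ z' ⟨x', hx', e0', e1', e2'⟩
            exact ⟨x + x', hH.2.1 x hx x' hx', by simp [e0, e0'],
              by simp [e1, e1'], by simp [e2, e2']⟩
          · rintro z ⟨x, hx, e0, e1, e2⟩
            exact ⟨-x, hH.2.2.1 x hx, by simp [e0], by simp [e1], by simp [e2]⟩
          · rintro z ⟨x, hx, e0, e1, e2⟩ r'
            exact ⟨vsmul x r', hH.2.2.2 x hx r', by simp [e0], by simp [e1],
              by simp [e2]⟩
        have hwit : ∀ x ∈ H, (![x i, x j, x (Fin.last (m + 3))] : Fin 3 → R) ∈ H3 :=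
          fun x hx => ⟨x, hx, by simp, by simp, by simp⟩
        have hpf : ∀ i₃ j₃ : Fin 3, i₃ ≠ j₃ → ∀ a b : R,
            ∃ z ∈ H3, z i₃ = a ∧ z j₃ = b := by
          intro i₃ j₃ hne a b
          fin_cases i₃ <;> fin_cases j₃
          · exact absurd rfl hne
          · obtain ⟨x, hx, e1, e2⟩ := hp i j hij a b
            exact ⟨_, hwit x hx, by simp [e1], by simp [e2]⟩
          · obtain ⟨x, hx, e1, e2⟩ := hp i (Fin.last (m + 3)) hi a b
            exact ⟨_, hwit x hx, by simp [e1], by simp [e2]⟩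
          · obtain ⟨x, hx, e1, e2⟩ := hp i j hij b a
            exact ⟨_, hwit x hx, by simp [e2], by simp [e1]⟩
          · exact absurd rfl hne
          · obtain ⟨x, hx, e1, e2⟩ := hp j (Fin.last (m + 3)) hj a b
            exact ⟨_, hwit x hx, by simp [e1], by simp [e2]⟩
          · obtain ⟨x, hx, e1, e2⟩ := hp i (Fin.last (m + 3)) hi b a
            exact ⟨_, hwit x hx, by simp [e2], by simp [e1]⟩
          · obtain ⟨x, hx, e1, e2⟩ := hp j (Fin.last (m + 3)) hj b a
            exact ⟨_, hwit x hx, by simp [e2], by simp [e1]⟩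
          · exact absurd rfl hne
        have h3u := B3 hR hsub hpf
        have hmem : (![a, b, 0] : Fin 3 → R) ∈ H3 := by rw [h3u]; trivial
        obtain ⟨x, hx, e0, e1, e2⟩ := hmem
        exact ⟨x, hx, by simpa using e0.symm, by simpa using e1.symm,
          by simpa using e2.symm⟩
      -- the kernel subgroup
      set K : Set (Fin (m + 3) → R) :=
        {y | (Fin.snoc y (0 : R) : Fin (m + 4) → R) ∈ H} with hKdef
      have hKsub : IsRSubgroup K := by
        refine ⟨?_, ?_, ?_, ?_⟩
        · show (Fin.snoc (0 : Fin (m + 3) → R) (0 : R) : Fin (m + 4) → R) ∈ H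
          have : (Fin.snoc (0 : Fin (m + 3) → R) (0 : R) : Fin (m + 4) → R)
              = (0 : Fin (m + 4) → R) := by
            funext i
            refine Fin.lastCases ?_ (fun i => ?_) i <;> simp
          rw [this]; exact hH.1
        · intro y hy y' hy'
          show (Fin.snoc (y + y') (0 : R) : Fin (m + 4) → R) ∈ H
          have : (Fin.snoc (y + y') (0 : R) : Fin (m + 4) → R)
              = (Fin.snoc y (0 : R) : Fin (m + 4) → R) +
                (Fin.snoc y' (0 : R) : Fin (m + 4) → R) := by
            funext i
            refine Fin.lastCases ?_ (fun i => ?_) i <;> simp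
          rw [this]
          exact hH.2.1 _ hy _ hy'
        · intro y hy
          show (Fin.snoc (-y) (0 : R) : Fin (m + 4) → R) ∈ H
          have : (Fin.snoc (-y) (0 : R) : Fin (m + 4) → R)
              = -(Fin.snoc y (0 : R) : Fin (m + 4) → R) := by
            funext i
            refine Fin.lastCases ?_ (fun i => ?_) i <;> simp
          rw [this]
          exact hH.2.2.1 _ hy
        · intro y hy r'
          show (Fin.snoc (vsmul y r') (0 : R) : Fin (m + 4) → R) ∈ H
          have : (Fin.snoc (vsmul y r') (0 : R) : Fin (m + 4) → R)
              = vsmul (Fin.snoc y (0 : R) : Fin (m + 4) → R) r' := by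
            funext i
            refine Fin.lastCases ?_ (fun i => ?_) i <;> simp [nf_zero_mul]
          rw [this]
          exact hH.2.2.2 _ hy r'
      have hKpf : ∀ i j : Fin (m + 3), i ≠ j → ∀ a b : R,
          ∃ y ∈ K, y i = a ∧ y j = b := by
        intro i j hij a b
        obtain ⟨x, hx, e1, e2, e3⟩ := H3univ i.castSucc j.castSucc
          (fun h => hij (Fin.castSucc_injective _ h)) (hlast i) (hlast j) a b
        refine ⟨fun t => x (Fin.castSucc t), ?_, e1, e2⟩
        show (Fin.snoc (fun t : Fin (m + 3) => x (Fin.castSucc t)) (0 : R) :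
          Fin (m + 4) → R) ∈ H
        have : (Fin.snoc (fun t : Fin (m + 3) => x (Fin.castSucc t)) (0 : R) :
            Fin (m + 4) → R) = x := by
          funext i'
          refine Fin.lastCases ?_ (fun i' => ?_) i' <;> simp [e3.symm]
        rw [this]; exact hx
      have hKuniv := IH (m + 3) (by omega) (by omega) K hKsub hKpf
      have hKall : ∀ y : Fin (m + 3) → R,
          (Fin.snoc y (0 : R) : Fin (m + 4) → R) ∈ H := by
        intro y
        have : y ∈ K := by rw [hKuniv]; trivial
        exact this
      obtain ⟨x₁, hx₁, hx₁l, -⟩ := hp (Fin.last (m + 3)) 0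
        (by simp [Fin.ext_iff]) 1 0
      have huH : (Fin.snoc (fun t : Fin (m + 3) => x₁ (Fin.castSucc t)) (0 : R) :
          Fin (m + 4) → R) ∈ H := hKall _
      have hdH : x₁ - (Fin.snoc (fun t : Fin (m + 3) => x₁ (Fin.castSucc t)) (0 : R) :
          Fin (m + 4) → R) ∈ H := rsub_sub_mem hH hx₁ huH
      apply Set.eq_univ_of_forall
      intro w
      have h1 : (Fin.snoc (fun t : Fin (m + 3) => w (Fin.castSucc t)) (0 : R) :
            Fin (m + 4) → R) +
          vsmul (x₁ - (Fin.snoc (fun t : Fin (m + 3) => x₁ (Fin.castSucc t)) (0 : R) :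
            Fin (m + 4) → R)) (w (Fin.last (m + 3))) ∈ H :=
        hH.2.1 _ (hKall _) _ (hH.2.2.2 _ hdH _)
      have heq : (Fin.snoc (fun t : Fin (m + 3) => w (Fin.castSucc t)) (0 : R) :
            Fin (m + 4) → R) +
          vsmul (x₁ - (Fin.snoc (fun t : Fin (m + 3) => x₁ (Fin.castSucc t)) (0 : R) :
            Fin (m + 4) → R)) (w (Fin.last (m + 3))) = w := by
        funext i
        refine Fin.lastCases ?_ (fun i => ?_) i
        · simp [hx₁l, nf_one_mul]
        · simp [nf_zero_mul]
      rwa [heq] at h1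

end Bgen
section Master

open Nearfield Set

variable {R : Type*} [Nearfield R]

/-- The master generation criterion: an `R`-subgroup of `R^n` (over a finite
proper nearfield) which is coordinatewise nonzero and not contained in any
"weight two relation" is everything. -/
lemma master (hR : IsProper R) {n : ℕ} {H : Set (Fin n → R)} (hH : IsRSubgroup H)
    (h1 : ∀ i, ∃ x ∈ H, x i ≠ 0)
    (h2 : ∀ i j : Fin n, i ≠ j → ∀ a : R, ∃ x ∈ H, x j ≠ a * x i) :
    H = Set.univ := by
  have hc : ∀ (i : Fin n) (a : R), ∃ x ∈ H, x i = a := by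
    intro i a
    obtain ⟨x, hx, hxi⟩ := h1 i
    exact ⟨vsmul x ((x i)⁻¹ * a), hH.2.2.2 x hx _,
      by simp [nf_mul_inv_cancel_left hxi]⟩
  rcases Nat.lt_or_ge n 2 with hn | hn
  · interval_cases n
    · apply Set.eq_univ_of_forall
      intro w
      have : w = 0 := funext fun i => i.elim0
      rw [this]; exact hH.1
    · apply Set.eq_univ_of_forall
      intro w
      obtain ⟨x, hx, hxi⟩ := hc 0 (w 0)
      have : w = x := by
        funext i
        rw [Subsingleton.elim i 0, hxi]
      rw [this]; exact hx
  · refine Bgen hR n hn H hH ?_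
    intro i j hij a b
    set K : Set (Fin 2 → R) := {y | ∃ x ∈ H, x i = y 0 ∧ x j = y 1} with hKdef
    have hKsub : IsRSubgroup K := by
      refine ⟨⟨0, hH.1, by simp⟩, ?_, ?_, ?_⟩
      · rintro y ⟨x, hx, e0, e1⟩ y' ⟨x', hx', e0', e1'⟩
        exact ⟨x + x', hH.2.1 x hx x' hx', by simp [e0, e0'], by simp [e1, e1']⟩
      · rintro y ⟨x, hx, e0, e1⟩
        exact ⟨-x, hH.2.2.1 x hx, by simp [e0], by simp [e1]⟩
      · rintro y ⟨x, hx, e0, e1⟩ r'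
        exact ⟨vsmul x r', hH.2.2.2 x hx r', by simp [e0], by simp [e1]⟩
    rcases classify2 hKsub with hKu | hK0 | ⟨a₀, hKa⟩
    · have hmem : (![a, b] : Fin 2 → R) ∈ K := by rw [hKu]; trivial
      obtain ⟨x, hx, e0, e1⟩ := hmem
      exact ⟨x, hx, by simpa using e0, by simpa using e1⟩
    · obtain ⟨x, hx, hxi⟩ := h1 i
      exact absurd (hK0 ![x i, x j] ⟨x, hx, by simp, by simp⟩) (by simpa using hxi)
    · obtain ⟨x, hx, hxj⟩ := h2 i j hij a₀
      exact absurd (by simpa using hKa ![x i, x j] ⟨x, hx, by simp, by simp⟩) hxj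

end Master
section Count

open Nearfield Set

variable {R : Type*} [Nearfield R]

lemma card_cSet_mul (k : ℕ) [Fintype R] :
    Nat.card ↥(cSet R k) * (Fintype.card R - 1) = Fintype.card R ^ k - 1 := by
  classical
  have hf : ∀ p : ↥(cSet R k) × {c : R // c ≠ 0},
      (fun t => p.2.1 * (p.1.1 : Fin k → R) t) ≠ (0 : Fin k → R) := by
    rintro ⟨⟨u, ⟨i, hu1, hu0⟩⟩, ⟨c, hc⟩⟩ h
    have := congrFun h i
    simp only [Pi.zero_apply] at this
    rw [hu1, nf_mul_one] at this
    exact hc this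
  set f : ↥(cSet R k) × {c : R // c ≠ 0} → {w : Fin k → R // w ≠ 0} :=
    fun p => ⟨fun t => p.2.1 * (p.1.1 : Fin k → R) t, hf p⟩ with hfdef
  have hbij : Function.Bijective f := by
    constructor
    · rintro ⟨⟨u, hu⟩, ⟨c, hc⟩⟩ ⟨⟨u', hu'⟩, ⟨c', hc'⟩⟩ h
      obtain ⟨i, hu1, hu0⟩ := hu
      obtain ⟨i', hu1', hu0'⟩ := hu'
      have heq : ∀ t, c * u t = c' * u' t := fun t => by
        have := congrArg Subtype.val h
        exact congrFun this t
      have hii : i = i' := by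
        rcases lt_trichotomy i i' with hlt | he | hlt
        · exfalso
          have := heq i
          rw [hu1, nf_mul_one, hu0' i hlt, nf_mul_zero] at this
          exact hc this
        · exact he
        · exfalso
          have := heq i'
          rw [hu1', nf_mul_one, hu0 i' hlt, nf_mul_zero] at this
          exact hc' this.symm
      have hcc : c = c' := by
        have hthis := heq i
        have hu'i : u' i = 1 := by rw [hii]; exact hu1'
        rw [hu1, nf_mul_one, hu'i, nf_mul_one] at hthis
        exact hthis
      have huu : u = u' := by
        funext t
        exact nf_mul_left_cancel hc (hcc ▸ heq t)
      simp [huu, hcc]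
    · rintro ⟨w, hw⟩
      obtain ⟨i, hi, hmin⟩ := exists_first hw
      refine ⟨⟨⟨fun t => (w i)⁻¹ * w t, ⟨i, by
          show (w i)⁻¹ * w i = 1
          rw [Nearfield.inv_mul_cancel _ hi], fun j hj => by
          show (w i)⁻¹ * w j = 0
          rw [hmin j hj, nf_mul_zero]⟩⟩, ⟨w i, hi⟩⟩, ?_⟩
      apply Subtype.ext
      funext t
      exact nf_mul_inv_cancel_left hi (w t)
  have hcard := Nat.card_congr (Equiv.ofBijective f hbij)
  rw [Nat.card_prod] at hcard
  have hnz : Nat.card {c : R // c ≠ 0} = Fintype.card R - 1 := by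
    rw [Nat.card_eq_fintype_card]
    have : Fintype.card {c : R // ¬(c = 0)} = Fintype.card R - Fintype.card {c : R // c = 0} :=
      Fintype.card_subtype_compl _
    rw [Fintype.card_subtype_eq (0 : R)] at this
    exact this
  have hvec : Nat.card {w : Fin k → R // w ≠ 0} = Fintype.card R ^ k - 1 := by
    rw [Nat.card_eq_fintype_card]
    have : Fintype.card {w : Fin k → R // ¬(w = 0)}
        = Fintype.card (Fin k → R) - Fintype.card {w : Fin k → R // w = 0} :=
      Fintype.card_subtype_compl _
    rw [Fintype.card_subtype_eq (0 : Fin k → R)] at this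
    rw [this]
    congr 1
    rw [Fintype.card_fun, Fintype.card_fin]
  rw [hnz, hvec] at hcard
  exact hcard

lemma two_le_card (R : Type*) [Nearfield R] [Fintype R] : 2 ≤ Fintype.card R := by
  have : Nontrivial R := ⟨⟨1, 0, nf_one_ne_zero⟩⟩
  exact Fintype.one_lt_card_iff_nontrivial.2 this

lemma card_cSet (k : ℕ) [Fintype R] :
    Nat.card ↥(cSet R k) = (Fintype.card R ^ k - 1) / (Fintype.card R - 1) := by
  have h2 := two_le_card R
  rw [← card_cSet_mul (R := R) k, Nat.mul_div_cancel _ (by omega)]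

end Count

/-- For a finite proper nearfield and `n = (q^k − 1)/(q − 1)`, some `k` vectors
generate `R^n`; consequently `mdim(k,R) = (q^k − 1)/(q − 1)`. -/
theorem mdim_eq {R : Type*} [Nearfield R] [Fintype R]
    (hR : IsProper R) {k n : ℕ} (hk : 1 ≤ k)
    (hn : n = (Fintype.card R ^ k - 1) / (Fintype.card R - 1)) :
    (∃ v : Fin k → Fin n → R, gen (Set.range v) = Set.univ) ∧
      ∀ m : ℕ, (∃ v : Fin k → Fin m → R, gen (Set.range v) = Set.univ) →
        m ≤ n := by
  classical
  haveI : Fintype ↥(cSet R k) := Fintype.ofFinite _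
  have hcard : Fintype.card ↥(cSet R k) = n := by
    rw [← Nat.card_eq_fintype_card, card_cSet, hn]
  constructor
  · -- existence of k generating vectors
    have e : ↥(cSet R k) ≃ Fin n := Fintype.equivFinOfCardEq hcard
    set col : Fin n → (Fin k → R) := fun j => (e.symm j : Fin k → R) with hcol
    have colinj : ∀ j j' : Fin n, col j = col j' → j = j' := by
      intro j j' h
      have := e.symm.injective (Subtype.ext h)
      exact this
    refine ⟨fun t j => col j t, ?_⟩
    have hrow : ∀ t : Fin k, (fun j => col j t) ∈ gen (Set.range fun t j => col j t) :=
      fun t => subset_gen _ ⟨t, rfl⟩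
    apply master hR (isRSubgroup_gen _)
    · intro i
      obtain ⟨s, hs1, -⟩ := (e.symm i).2
      exact ⟨fun j => col j s, hrow s, by
        show col i s ≠ 0
        rw [show col i s = 1 from hs1]
        exact nf_one_ne_zero⟩
    · intro i j hij a
      by_contra hall
      push_neg at hall
      have hcols : ∀ t, col j t = a * col i t := fun t => hall _ (hrow t)
      obtain ⟨s, hs1, hs0⟩ := (e.symm i).2
      obtain ⟨s', hs1', hs0'⟩ := (e.symm j).2
      have hs1 : col i s = 1 := hs1
      have hs0 : ∀ u, u < s → col i u = 0 := hs0
      have hs1' : col j s' = 1 := hs1'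
      have hs0' : ∀ u, u < s' → col j u = 0 := hs0'
      have ha : a ≠ 0 := by
        intro h
        have := hcols s'
        rw [hs1', h, nf_zero_mul] at this
        exact nf_one_ne_zero this
      have hss : s = s' := by
        rcases lt_trichotomy s s' with hlt | heq | hlt
        · exfalso
          have := hcols s
          rw [hs0' s hlt, hs1, nf_mul_one] at this
          exact ha this.symm
        · exact heq
        · exfalso
          have := hcols s'
          rw [hs1', hs0 s' hlt, nf_mul_zero] at this
          exact nf_one_ne_zero this
      have ha1 : a = 1 := by
        have h := hcols s
        rw [hs1, nf_mul_one, hss, hs1'] at h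
        exact h.symm
      have hcc : col i = col j := by
        funext t
        rw [hcols t, ha1, nf_one_mul]
      exact hij (colinj i j hcc)
  · -- upper bound
    rintro m ⟨v, hv⟩
    have hcne : ∀ j : Fin m, (fun t => v t j) ≠ (0 : Fin k → R) := by
      intro j h0
      have hsub : IsRSubgroup {w : Fin m → R | w j = 0} := by
        refine ⟨by simp, ?_, ?_, ?_⟩
        · intro x hx y hy
          simp only [Set.mem_setOf_eq] at *
          rw [Pi.add_apply, hx, hy, add_zero]
        · intro x hx
          simp only [Set.mem_setOf_eq] at *
          rw [Pi.neg_apply, hx, neg_zero]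
        · intro x hx r
          simp only [Set.mem_setOf_eq] at *
          rw [vsmul_apply, hx, nf_zero_mul]
      have hr : Set.range v ⊆ {w : Fin m → R | w j = 0} := by
        rintro _ ⟨t, rfl⟩
        exact congrFun h0 t
      have := gen_min hsub hr
      rw [hv] at this
      exact nf_one_ne_zero (this (Set.mem_univ (fun _ => (1 : R))))
    choose i0 hi0 hmin using fun j => exists_first (hcne j)
    have hNmem : ∀ j : Fin m, (fun t => (v (i0 j) j)⁻¹ * v t j) ∈ cSet R k := by
      intro j
      refine ⟨i0 j, ?_, fun s hs => ?_⟩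
      · show (v (i0 j) j)⁻¹ * v (i0 j) j = 1
        exact Nearfield.inv_mul_cancel _ (hi0 j)
      · show (v (i0 j) j)⁻¹ * v s j = 0
        rw [hmin j s hs, nf_mul_zero]
    have hNinj : Function.Injective
        (fun j : Fin m => (⟨fun t => (v (i0 j) j)⁻¹ * v t j, hNmem j⟩ : ↥(cSet R k))) := by
      intro j j' hN
      by_contra hne
      have hfun : ∀ t, (v (i0 j) j)⁻¹ * v t j = (v (i0 j') j')⁻¹ * v t j' :=
        fun t => congrFun (congrArg Subtype.val hN) t
      have hrel : ∀ t, v t j = (v (i0 j) j * (v (i0 j') j')⁻¹) * v t j' := by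
        intro t
        have h1 : v (i0 j) j * ((v (i0 j) j)⁻¹ * v t j)
            = v (i0 j) j * ((v (i0 j') j')⁻¹ * v t j') := by rw [hfun t]
        rw [nf_mul_inv_cancel_left (hi0 j), ← nf_assoc] at h1
        rw [h1, nf_assoc]
      set lam := v (i0 j) j * (v (i0 j') j')⁻¹ with hlam
      have hsub : IsRSubgroup {w : Fin m → R | w j = lam * w j'} := by
        refine ⟨by simp [nf_mul_zero], ?_, ?_, ?_⟩
        · intro x hx y hy
          simp only [Set.mem_setOf_eq] at *
          rw [Pi.add_apply, Pi.add_apply, hx, hy, nf_ld]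
        · intro x hx
          simp only [Set.mem_setOf_eq] at *
          rw [Pi.neg_apply, Pi.neg_apply, hx, nf_mul_neg]
        · intro x hx r
          simp only [Set.mem_setOf_eq] at *
          rw [vsmul_apply, vsmul_apply, hx, nf_assoc]
      have hr : Set.range v ⊆ {w : Fin m → R | w j = lam * w j'} := by
        rintro _ ⟨t, rfl⟩
        exact hrel t
      have hall := gen_min hsub hr
      rw [hv] at hall
      have h1 := hall (Set.mem_univ (Pi.single j 1 : Fin m → R))
      have hj1 : (Pi.single j 1 : Fin m → R) j = 1 := by simp
      have hj0 : (Pi.single j 1 : Fin m → R) j' = 0 :=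
        Pi.single_eq_of_ne (fun h => hne h.symm) 1
      rw [Set.mem_setOf_eq, hj1, hj0, nf_mul_zero] at h1
      exact nf_one_ne_zero h1
    have := Fintype.card_le_of_injective _ hNinj
    rw [hcard, Fintype.card_fin] at this
    exact this
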